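/- arXiv:1110.5014 — 2 statements merged into one kernel-verified Lean document; each statement's English description precedes it below -/
import Mathlib

section
/- Let T_n(x) = Σ_{k=1}^n a_k(n)·x^k where a_k(n) is the number of permutations of [n] whose longest alternating subsequence has length k, and let R_n(x) = Σ_{k=1}^{n-1} R(n,k)·x^k where R(n,k) is the number of permutations of [n] with k alternating runs. Then for all n ≥ 2: T_n(x) = (1/2)·(1+x)·R_n(x). -/
open Finset Polynomial

/-- `pval π i` is the value `π(i+1)` of the permutation in one-based value convention
(values `1,…,n`), and `0` for indices out of range. -/
def pval {n : ℕ} (π : Equiv.Perm (Fin n)) (i : ℕ) : ℕ :=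
  if h : i < n then (π ⟨i, h⟩ : ℕ) + 1 else 0

/-- number of positions where `π` changes direction -/
def dirChanges {n : ℕ} (π : Equiv.Perm (Fin n)) : ℕ :=
  ((Finset.Ioo 0 (n - 1)).filter (fun i =>
    (pval π (i-1) < pval π i ∧ pval π (i+1) < pval π i) ∨
    (pval π i < pval π (i-1) ∧ pval π i < pval π (i+1)))).card

/-- number of alternating runs of `π` (one more than the number of direction
changes; `0` by convention when `n ≤ 1`). -/
def altRuns {n : ℕ} (π : Equiv.Perm (Fin n)) : ℕ :=
  if n ≤ 1 then 0 else dirChanges π + 1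

/-- `R(n,k)`: the number of permutations of `[n]` with `k` alternating runs. -/
def runNum (n k : ℕ) : ℕ :=
  (Finset.univ.filter (fun π : Equiv.Perm (Fin n) => altRuns π = k)).card

/-- `altOK d l` : the list `l` is alternating, starting with a descent iff `d = true`. -/
def altOK : Bool → List ℕ → Bool
  | _, [] => true
  | _, [_] => true
  | d, a :: b :: t => (if d then decide (b < a) else decide (a < b)) && altOK (!d) (b :: t)

/-- length of the longest alternating (down-up-down-…) subsequence of a list -/
def las (l : List ℕ) : ℕ :=
  ((l.sublists.filter (altOK true)).map List.length).foldr max 0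

/-- `a_k(n)` (written `anum n k`): the number of permutations of `[n]` whose longest
alternating subsequence has length `k`. -/
def anum (n k : ℕ) : ℕ :=
  (Finset.univ.filter (fun π : Equiv.Perm (Fin n) =>
    las (List.ofFn (fun i : Fin n => pval π (i : ℕ))) = k)).card

local infixl:50 " <+ " => List.Sublist

def las' (d : Bool) (l : List ℕ) : ℕ :=
  ((l.sublists.filter (altOK d)).map List.length).foldr max 0

lemma altOK_nil (d : Bool) : altOK d [] = true := by cases d <;> rfl
lemma altOK_single (d : Bool) (x : ℕ) : altOK d [x] = true := by cases d <;> rfl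
lemma altOK_cons_cons (d : Bool) (a b : ℕ) (t : List ℕ) :
    altOK d (a :: b :: t) =
      ((if d then decide (b < a) else decide (a < b)) && altOK (!d) (b :: t)) := by
  cases d <;> rfl

lemma altOK_tail {d : Bool} {c : ℕ} {rest : List ℕ} (h : altOK d (c :: rest)) :
    altOK (!d) rest = true := by
  cases rest with
  | nil => exact altOK_nil _
  | cons b t => rw [altOK_cons_cons] at h; exact (Bool.and_eq_true _ _ |>.mp h).2

lemma foldr_max_le {L : List ℕ} {m : ℕ} (h : ∀ a ∈ L, a ≤ m) : L.foldr max 0 ≤ m := by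
  induction L with
  | nil => exact Nat.zero_le m
  | cons a L ih =>
    simp only [List.foldr_cons, max_le_iff]
    exact ⟨h a (List.mem_cons_self), ih fun x hx => h x (List.mem_cons_of_mem _ hx)⟩

lemma le_foldr_max {L : List ℕ} {a : ℕ} (h : a ∈ L) : a ≤ L.foldr max 0 := by
  induction L with
  | nil => cases h
  | cons b L ih =>
    rcases List.mem_cons.mp h with rfl | h'
    · exact le_max_left _ _
    · exact le_trans (ih h') (le_max_right _ _)

lemma foldr_max_mem (L : List ℕ) : L.foldr max 0 = 0 ∨ L.foldr max 0 ∈ L := by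
  induction L with
  | nil => exact Or.inl rfl
  | cons a L ih =>
    simp only [List.foldr_cons]
    rcases max_choice a (L.foldr max 0) with h | h
    · rw [h]; exact Or.inr (List.mem_cons_self)
    · rw [h]
      rcases ih with h0 | hm
      · rw [h0]; left; rfl
      · exact Or.inr (List.mem_cons_of_mem _ hm)

lemma le_las' {d : Bool} {s l : List ℕ} (hs : s <+ l) (hok : altOK d s) :
    s.length ≤ las' d l := by
  apply le_foldr_max
  simp only [List.mem_map]
  exact ⟨s, List.mem_filter.mpr ⟨List.mem_sublists.mpr hs, hok⟩, rfl⟩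

lemma las'_le {d : Bool} {l : List ℕ} {m : ℕ}
    (h : ∀ s, s <+ l → altOK d s → s.length ≤ m) : las' d l ≤ m := by
  apply foldr_max_le
  intro a ha
  simp only [List.mem_map] at ha
  obtain ⟨s, hs, rfl⟩ := ha
  have := List.mem_filter.mp hs
  exact h s (List.mem_sublists.mp this.1) this.2

lemma las'_spec (d : Bool) (l : List ℕ) :
    ∃ s, s <+ l ∧ altOK d s = true ∧ s.length = las' d l := by
  rcases foldr_max_mem ((l.sublists.filter (altOK d)).map List.length) with h | h
  · exact ⟨[], List.nil_sublist l, altOK_nil d, h.symm⟩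
  · simp only [List.mem_map] at h
    obtain ⟨s, hs, hlen⟩ := h
    have := List.mem_filter.mp hs
    exact ⟨s, List.mem_sublists.mp this.1, this.2, hlen⟩
lemma sub_tail {c x : ℕ} {rest L : List ℕ} (h : (c :: rest) <+ (x :: L)) : rest <+ L := by
  cases h with
  | cons _ h => exact ((List.sublist_cons_self c rest).trans h)
  | cons_cons _ h => exact h

lemma sub_cases {s : List ℕ} {x : ℕ} {L : List ℕ} (h : s <+ (x :: L)) :
    s <+ L ∨ ∃ rest, s = x :: rest ∧ rest <+ L := by
  cases h with
  | cons _ h => exact Or.inl h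
  | cons_cons _ h => exact Or.inr ⟨_, rfl, h⟩

lemma sub_of_ne {c x : ℕ} {rest L : List ℕ} (h : (c :: rest) <+ (x :: L)) (hne : c ≠ x) :
    (c :: rest) <+ L := by
  cases h with
  | cons _ h => exact h
  | cons_cons _ h => exact absurd rfl hne

lemma one_le_las' {d : Bool} {x : ℕ} {L : List ℕ} : 1 ≤ las' d (x :: L) := by
  have : [x] <+ (x :: L) := (List.nil_sublist L).cons₂ x
  simpa using le_las' this (altOK_single d x)

-- key recurrence 1 : head descent, true
lemma las'_true_desc {a b : ℕ} {t : List ℕ} (hab : b < a) (hnd : a ∉ b :: t) :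
    las' true (a :: b :: t) = las' false (b :: t) + 1 := by
  apply le_antisymm
  · apply las'_le
    intro s hs hok
    cases s with
    | nil => simp
    | cons c rest =>
      have h1 : rest <+ (b :: t) := sub_tail hs
      have h2 : altOK false rest := by simpa using altOK_tail hok
      simpa using Nat.add_le_add_right (le_las' h1 h2) 1
  · obtain ⟨s, hs, hok, hlen⟩ := las'_spec false (b :: t)
    cases s with
    | nil =>
      rw [← hlen]
      simpa using @one_le_las' true a (b :: t)
    | cons c rest =>
      have hcmem : c ∈ b :: t := hs.subset (List.mem_cons_self)
      have hac : a ≠ c := fun h => hnd (h ▸ hcmem)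
      rcases lt_or_gt_of_ne hac with hlt | hgt
      · -- a < c, so b < a < c ; use a :: b :: rest
        cases rest with
        | nil =>
          -- s = [c], las' false = 1; use [a, b]
          rw [← hlen]
          have hsub : [a, b] <+ (a :: b :: t) :=
            ((List.nil_sublist t).cons₂ b).cons₂ a
          have hok2 : altOK true [a, b] = true := by
            rw [altOK_cons_cons]; simp [hab, altOK_single]
          simpa using le_las' hsub hok2
        | cons e r2 =>
          have hce : c < e ∧ altOK true (e :: r2) := by
            rw [altOK_cons_cons] at hok; simpa using hok
          have hcb : c ≠ b := by
            intro h; rw [h] at hlt; exact absurd hab (not_lt.mpr hlt.le)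
          have hrt : (c :: e :: r2) <+ t := sub_of_ne hs hcb
          have hrt2 : (e :: r2) <+ t := (List.sublist_cons_self c _).trans hrt
          have hsub : (a :: b :: e :: r2) <+ (a :: b :: t) := (hrt2.cons₂ b).cons₂ a
          have hbe : b < e := lt_trans (lt_trans hab hlt) hce.1
          have hok2 : altOK true (a :: b :: e :: r2) = true := by
            rw [altOK_cons_cons, altOK_cons_cons]
            simp [hab, hbe, hce.2]
          have := le_las' hsub hok2
          simp only [List.length_cons] at this hlen ⊢
          omega
      · -- c < a : use a :: s
        have hsub : (a :: c :: rest) <+ (a :: b :: t) := hs.cons₂ a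
        have hok2 : altOK true (a :: c :: rest) = true := by
          rw [altOK_cons_cons]; simp [hgt, hok]
        have := le_las' hsub hok2
        simp only [List.length_cons] at this hlen ⊢
        omega

-- key recurrence 2 : head ascent, true
lemma las'_true_asc {a b : ℕ} {t : List ℕ} (hab : a < b) :
    las' true (a :: b :: t) = las' true (b :: t) := by
  apply le_antisymm
  · apply las'_le
    intro s hs hok
    rcases sub_cases hs with h | ⟨rest, rfl, hrest⟩
    · exact le_las' h hok
    · cases rest with
      | nil => simpa using @one_le_las' true b t
      | cons c r2 =>
        have hc : c < a ∧ altOK false (c :: r2) := by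
          rw [altOK_cons_cons] at hok; simpa using hok
        have hcb : c ≠ b := ne_of_lt (lt_trans hc.1 hab)
        have hrt : (c :: r2) <+ t := sub_of_ne hrest hcb
        have hsub : (b :: c :: r2) <+ (b :: t) := hrt.cons₂ b
        have hok2 : altOK true (b :: c :: r2) = true := by
          rw [altOK_cons_cons]; simp [lt_trans hc.1 hab, hc.2]
        simpa using le_las' hsub hok2
  · apply las'_le
    intro s hs hok
    exact le_las' (hs.cons a) hok

-- mirrored versions
lemma las'_false_asc {a b : ℕ} {t : List ℕ} (hab : a < b) (hnd : a ∉ b :: t) :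
    las' false (a :: b :: t) = las' true (b :: t) + 1 := by
  apply le_antisymm
  · apply las'_le
    intro s hs hok
    cases s with
    | nil => simp
    | cons c rest =>
      have h1 : rest <+ (b :: t) := sub_tail hs
      have h2 : altOK true rest := by simpa using altOK_tail hok
      simpa using Nat.add_le_add_right (le_las' h1 h2) 1
  · obtain ⟨s, hs, hok, hlen⟩ := las'_spec true (b :: t)
    cases s with
    | nil =>
      rw [← hlen]
      simpa using @one_le_las' false a (b :: t)
    | cons c rest =>
      have hcmem : c ∈ b :: t := hs.subset (List.mem_cons_self)
      have hac : a ≠ c := fun h => hnd (h ▸ hcmem)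
      rcases lt_or_gt_of_ne hac with hlt | hgt
      · -- a < c : use a :: s
        have hsub : (a :: c :: rest) <+ (a :: b :: t) := hs.cons₂ a
        have hok2 : altOK false (a :: c :: rest) = true := by
          rw [altOK_cons_cons]; simp [hlt, hok]
        have := le_las' hsub hok2
        simp only [List.length_cons] at this hlen ⊢
        omega
      · -- c < a < b
        cases rest with
        | nil =>
          rw [← hlen]
          have hsub : [a, b] <+ (a :: b :: t) :=
            ((List.nil_sublist t).cons₂ b).cons₂ a
          have hok2 : altOK false [a, b] = true := by
            rw [altOK_cons_cons]; simp [hab, altOK_single]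
          simpa using le_las' hsub hok2
        | cons e r2 =>
          have hce : e < c ∧ altOK false (e :: r2) := by
            rw [altOK_cons_cons] at hok; simpa using hok
          have hcb : c ≠ b := by
            intro h; rw [h] at hgt; exact absurd hab (not_lt.mpr hgt.le)
          have hrt : (c :: e :: r2) <+ t := sub_of_ne hs hcb
          have hrt2 : (e :: r2) <+ t := (List.sublist_cons_self c _).trans hrt
          have hsub : (a :: b :: e :: r2) <+ (a :: b :: t) := (hrt2.cons₂ b).cons₂ a
          have hbe : e < b := lt_trans hce.1 (lt_trans hgt hab)
          have hok2 : altOK false (a :: b :: e :: r2) = true := by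
            rw [altOK_cons_cons, altOK_cons_cons]
            simp [hab, hbe, hce.2]
          have := le_las' hsub hok2
          simp only [List.length_cons] at this hlen ⊢
          omega

lemma las'_false_desc {a b : ℕ} {t : List ℕ} (hab : b < a) :
    las' false (a :: b :: t) = las' false (b :: t) := by
  apply le_antisymm
  · apply las'_le
    intro s hs hok
    rcases sub_cases hs with h | ⟨rest, rfl, hrest⟩
    · exact le_las' h hok
    · cases rest with
      | nil => simpa using @one_le_las' false b t
      | cons c r2 =>
        have hc : a < c ∧ altOK true (c :: r2) := by
          rw [altOK_cons_cons] at hok; simpa using hok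
        have hcb : c ≠ b := ne_of_gt (lt_trans hab hc.1)
        have hrt : (c :: r2) <+ t := sub_of_ne hrest hcb
        have hsub : (b :: c :: r2) <+ (b :: t) := hrt.cons₂ b
        have hok2 : altOK false (b :: c :: r2) = true := by
          rw [altOK_cons_cons]; simp [lt_trans hab hc.1, hc.2]
        simpa using le_las' hsub hok2
  · apply las'_le
    intro s hs hok
    exact le_las' (hs.cons a) hok
lemma las'_single (d : Bool) (x : ℕ) : las' d [x] = 1 := by
  apply le_antisymm
  · apply las'_le
    intro s hs _
    simpa using hs.length_le
  · exact one_le_las'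

def dcL : List ℕ → ℕ
  | a :: b :: c :: t =>
      (if (a < b ∧ c < b) ∨ (b < a ∧ b < c) then 1 else 0) + dcL (b :: c :: t)
  | _ => 0

lemma dcL_nil : dcL [] = 0 := rfl
lemma dcL_single (a : ℕ) : dcL [a] = 0 := rfl
lemma dcL_pair (a b : ℕ) : dcL [a, b] = 0 := rfl
lemma dcL_cons₃ (a b c : ℕ) (t : List ℕ) :
    dcL (a :: b :: c :: t) =
      (if (a < b ∧ c < b) ∨ (b < a ∧ b < c) then 1 else 0) + dcL (b :: c :: t) := rfl

lemma lasForm : ∀ (t : List ℕ) (a b : ℕ), (a :: b :: t).Nodup →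
    las' true (a :: b :: t) = dcL (a :: b :: t) + 1 + (if b < a then 1 else 0) ∧
    las' false (a :: b :: t) = dcL (a :: b :: t) + 1 + (if a < b then 1 else 0) := by
  intro t
  induction t with
  | nil =>
    intro a b hnd
    have hab : a ≠ b := by simp at hnd; tauto
    have ha : a ∉ [b] := by simpa using hab
    rcases lt_or_gt_of_ne hab with h | h
    · rw [las'_true_asc h, las'_false_asc h ha, las'_single]
      simp [dcL_pair, h, not_lt.mpr h.le]
    · rw [las'_true_desc h ha, las'_false_desc h, las'_single]
      simp [dcL_pair, h, not_lt.mpr h.le]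
  | cons c t' ih =>
    intro a b hnd
    have hnd' : (b :: c :: t').Nodup := hnd.of_cons
    have hab : a ≠ b := by simp at hnd; tauto
    have hbc : b ≠ c := by simp at hnd'; tauto
    obtain ⟨iht, ihf⟩ := ih b c hnd'
    have ha : a ∉ b :: c :: t' := by simp at hnd ⊢; tauto
    rcases lt_or_gt_of_ne hab with h | h
    · rw [las'_true_asc h, las'_false_asc h ha, iht, dcL_cons₃]
      rcases lt_or_gt_of_ne hbc with h2 | h2 <;>
        simp [h, h2, not_lt.mpr h.le, not_lt.mpr h2.le] <;> omega
    · rw [las'_true_desc h ha, las'_false_desc h, ihf, dcL_cons₃]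
      rcases lt_or_gt_of_ne hbc with h2 | h2 <;>
        simp [h, h2, not_lt.mpr h.le, not_lt.mpr h2.le] <;> omega
lemma dcL_eq : ∀ (l : List ℕ), dcL l =
    ((Finset.Ioo 0 (l.length - 1)).filter (fun i =>
      (l.getD (i-1) 0 < l.getD i 0 ∧ l.getD (i+1) 0 < l.getD i 0) ∨
      (l.getD i 0 < l.getD (i-1) 0 ∧ l.getD i 0 < l.getD (i+1) 0))).card
  | [] => by simp [dcL_nil]
  | [a] => by simp [dcL_single]
  | [a, b] => by
      have h : Finset.Ioo (0:ℕ) 1 = ∅ := by decide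
      simp [dcL_pair, h]
  | a :: b :: c :: t => by
      rw [dcL_cons₃, dcL_eq (b :: c :: t)]
      simp only [List.length_cons, Nat.add_sub_cancel]
      have hins : Finset.Ioo 0 (t.length + 1 + 1) = insert 1 (Finset.Ioo 1 (t.length + 1 + 1)) := by
        ext i; simp only [Finset.mem_Ioo, Finset.mem_insert]; omega
      rw [hins, Finset.filter_insert]
      have hshift : ((Finset.Ioo 1 (t.length + 1 + 1)).filter (fun i =>
          ((a :: b :: c :: t).getD (i-1) 0 < (a :: b :: c :: t).getD i 0 ∧
            (a :: b :: c :: t).getD (i+1) 0 < (a :: b :: c :: t).getD i 0) ∨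
          ((a :: b :: c :: t).getD i 0 < (a :: b :: c :: t).getD (i-1) 0 ∧
            (a :: b :: c :: t).getD i 0 < (a :: b :: c :: t).getD (i+1) 0))).card
        = ((Finset.Ioo 0 (t.length + 1)).filter (fun i =>
          ((b :: c :: t).getD (i-1) 0 < (b :: c :: t).getD i 0 ∧
            (b :: c :: t).getD (i+1) 0 < (b :: c :: t).getD i 0) ∨
          ((b :: c :: t).getD i 0 < (b :: c :: t).getD (i-1) 0 ∧
            (b :: c :: t).getD i 0 < (b :: c :: t).getD (i+1) 0))).card := by
        apply Finset.card_nbij' (fun i => i - 1) (fun j => j + 1)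
        · intro i hi
          simp only [Finset.mem_coe, Finset.mem_filter, Finset.mem_Ioo] at hi ⊢
          obtain ⟨⟨h1, h2⟩, hp⟩ := hi
          obtain ⟨k, rfl⟩ : ∃ k, i = k + 2 := ⟨i - 2, by omega⟩
          constructor
          · omega
          · simpa [List.getD_cons_succ] using hp
        · intro j hj
          simp only [Finset.mem_coe, Finset.mem_filter, Finset.mem_Ioo] at hj ⊢
          obtain ⟨⟨h1, h2⟩, hp⟩ := hj
          obtain ⟨k, rfl⟩ : ∃ k, j = k + 1 := ⟨j - 1, by omega⟩
          constructor
          · omega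
          · simpa [List.getD_cons_succ] using hp
        · intro i hi
          simp only [Finset.mem_coe, Finset.mem_filter, Finset.mem_Ioo] at hi
          dsimp only; omega
        · intro j _
          dsimp only; omega
      rw [apply_ite Finset.card, Finset.card_insert_of_notMem (by simp), hshift]
      by_cases hc : (a < b ∧ c < b) ∨ (b < a ∧ b < c)
      · rw [if_pos hc, if_pos (by simpa using hc)]; omega
      · rw [if_neg hc, if_neg (by simpa using hc)]; omega
-- bridging
lemma las_eq_las' (l : List ℕ) : las l = las' true l := rfl

lemma getD_plist {n : ℕ} (π : Equiv.Perm (Fin n)) (i : ℕ) :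
    (List.ofFn (fun j : Fin n => pval π (j : ℕ))).getD i 0 = pval π i := by
  by_cases h : i < n
  · rw [List.getD_eq_getElem _ _ (by simpa using h)]
    simp only [List.getElem_ofFn, pval]
  · rw [List.getD_eq_default _ _ (by simpa using not_lt.mp h)]
    simp [pval, h]

lemma nodup_plist {n : ℕ} (π : Equiv.Perm (Fin n)) :
    (List.ofFn (fun j : Fin n => pval π (j : ℕ))).Nodup := by
  rw [List.nodup_ofFn]
  intro i j hij
  simp only [pval, Fin.is_lt, dif_pos] at hij
  have : π ⟨i, i.is_lt⟩ = π ⟨j, j.is_lt⟩ := by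
    apply Fin.ext; omega
  have := π.injective this
  simpa [Fin.ext_iff] using this

lemma dcL_plist {n : ℕ} (π : Equiv.Perm (Fin n)) :
    dcL (List.ofFn (fun j : Fin n => pval π (j : ℕ))) = dirChanges π := by
  rw [dcL_eq, dirChanges]
  have hlen : (List.ofFn (fun j : Fin n => pval π (j : ℕ))).length = n := by simp
  rw [hlen]
  congr 1
  apply Finset.filter_congr
  intro i _
  simp only [getD_plist]

lemma las_formula {n : ℕ} (hn : 2 ≤ n) (π : Equiv.Perm (Fin n)) :
    las (List.ofFn (fun j : Fin n => pval π (j : ℕ)))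
      = dirChanges π + 1 + (if pval π 1 < pval π 0 then 1 else 0) := by
  have hlen : (List.ofFn (fun j : Fin n => pval π (j : ℕ))).length = n := by simp
  obtain ⟨a, L, hL⟩ := List.exists_cons_of_ne_nil
    (fun h => by rw [h] at hlen; simp at hlen; omega :
      List.ofFn (fun j : Fin n => pval π (j : ℕ)) ≠ [])
  obtain ⟨b, t, hT⟩ := List.exists_cons_of_ne_nil
    (fun h => by rw [h] at hL; rw [hL] at hlen; simp at hlen; omega : L ≠ [])
  have hl : List.ofFn (fun j : Fin n => pval π (j : ℕ)) = a :: b :: t := by rw [hL, hT]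
  have hnd : (a :: b :: t).Nodup := hl ▸ nodup_plist π
  have ha : pval π 0 = a := by
    have h0 := getD_plist π 0
    rw [hl] at h0; simpa using h0.symm
  have hb : pval π 1 = b := by
    have h1 := getD_plist π 1
    rw [hl] at h1; simpa using h1.symm
  have hform := (lasForm t a b hnd).1
  calc las (List.ofFn (fun j : Fin n => pval π (j : ℕ)))
      = las' true (a :: b :: t) := by rw [las_eq_las', hl]
    _ = dcL (a :: b :: t) + 1 + (if b < a then 1 else 0) := hform
    _ = dirChanges π + 1 + (if pval π 1 < pval π 0 then 1 else 0) := by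
        rw [← hl, dcL_plist π, ha, hb]
lemma pval_rev_lt_iff {n : ℕ} (π : Equiv.Perm (Fin n)) {i j : ℕ} (hi : i < n) (hj : j < n) :
    (pval (π.trans Fin.revPerm) i < pval (π.trans Fin.revPerm) j ↔ pval π j < pval π i) := by
  simp only [pval, dif_pos hi, dif_pos hj, Equiv.trans_apply, Fin.revPerm_apply, Fin.val_rev]
  have h1 := (π ⟨i, hi⟩).is_lt
  have h2 := (π ⟨j, hj⟩).is_lt
  omega

lemma dirChanges_rev {n : ℕ} (π : Equiv.Perm (Fin n)) :
    dirChanges (π.trans Fin.revPerm) = dirChanges π := by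
  unfold dirChanges
  congr 1
  apply Finset.filter_congr
  intro i hi
  simp only [Finset.mem_Ioo] at hi
  have h1 : i - 1 < n := by omega
  have h2 : i < n := by omega
  have h3 : i + 1 < n := by omega
  rw [pval_rev_lt_iff π h1 h2, pval_rev_lt_iff π h3 h2,
    pval_rev_lt_iff π h2 h1, pval_rev_lt_iff π h2 h3]
  constructor
  · exact Or.symm
  · exact Or.symm

lemma pval_ne {n : ℕ} (hn : 2 ≤ n) (π : Equiv.Perm (Fin n)) : pval π 0 ≠ pval π 1 := by
  have h0 : (0:ℕ) < n := by omega
  have h1 : (1:ℕ) < n := by omega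
  simp only [pval, dif_pos h0, dif_pos h1]
  intro h
  have : π ⟨0, h0⟩ = π ⟨1, h1⟩ := Fin.ext (by omega)
  have := π.injective this
  simp [Fin.ext_iff] at this

lemma dirChanges_le {n : ℕ} (π : Equiv.Perm (Fin n)) : dirChanges π ≤ n - 2 := by
  have := Finset.card_filter_le (Finset.Ioo 0 (n-1)) (fun i =>
    (pval π (i-1) < pval π i ∧ pval π (i+1) < pval π i) ∨
    (pval π i < pval π (i-1) ∧ pval π i < pval π (i+1)))
  rw [Nat.card_Ioo] at this
  unfold dirChanges
  omega

/-- Bóna's identity `T_n(x) = (1/2)(1+x) R_n(x)` for `n ≥ 2`. -/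
theorem stmt8 :
    ∀ n, 2 ≤ n →
      (∑ k ∈ Finset.Icc 1 n, (anum n k : Polynomial ℝ) * X^k)
        = Polynomial.C (1/2 : ℝ) * (1 + X)
            * ∑ k ∈ Finset.Icc 1 (n-1), (runNum n k : Polynomial ℝ) * X^k := by

  intro n hn
  have hn1 : ¬ (n ≤ 1) := by omega
  set f : Equiv.Perm (Fin n) → ℕ :=
    fun π => las (List.ofFn fun i : Fin n => pval π (i : ℕ)) with hf
  have haltRuns : ∀ π : Equiv.Perm (Fin n), altRuns π = dirChanges π + 1 :=
    fun π => if_neg hn1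
  -- step 1 : LHS as a sum over permutations
  have hLHS : (∑ k ∈ Finset.Icc 1 n, (anum n k : Polynomial ℝ) * X^k)
      = ∑ π : Equiv.Perm (Fin n), X ^ (f π) := by
    rw [← Finset.sum_fiberwise_of_maps_to (g := f) (t := Finset.Icc 1 n)
      (fun π _ => ?_) (fun π => (X : Polynomial ℝ) ^ (f π))]
    · apply Finset.sum_congr rfl
      intro k _
      have step : ∑ π ∈ Finset.univ.filter (fun π => f π = k), (X : Polynomial ℝ) ^ (f π)
          = ∑ π ∈ Finset.univ.filter (fun π => f π = k), (X : Polynomial ℝ) ^ k :=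
        Finset.sum_congr rfl (fun π hπ => by rw [(Finset.mem_filter.mp hπ).2])
      rw [step, Finset.sum_const, nsmul_eq_mul]
      rfl
    · -- f π ∈ Icc 1 n
      have h1 : f π = dirChanges π + 1 + (if pval π 1 < pval π 0 then 1 else 0) :=
        las_formula hn π
      have h2 := dirChanges_le π
      rw [Finset.mem_Icc, h1]
      split_ifs <;> omega
  -- step 2 : RHS sum as a sum over permutations
  have hRHS : (∑ k ∈ Finset.Icc 1 (n-1), (runNum n k : Polynomial ℝ) * X^k)
      = ∑ π : Equiv.Perm (Fin n), X ^ (altRuns π) := by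
    rw [← Finset.sum_fiberwise_of_maps_to (g := fun π : Equiv.Perm (Fin n) => altRuns π) (t := Finset.Icc 1 (n-1))
      (fun π _ => ?_) (fun π => (X : Polynomial ℝ) ^ (altRuns π))]
    · apply Finset.sum_congr rfl
      intro k _
      have step : ∑ π ∈ Finset.univ.filter (fun π : Equiv.Perm (Fin n) => altRuns π = k),
            (X : Polynomial ℝ) ^ (altRuns π)
          = ∑ π ∈ Finset.univ.filter (fun π : Equiv.Perm (Fin n) => altRuns π = k),
              (X : Polynomial ℝ) ^ k :=
        Finset.sum_congr rfl (fun π hπ => by rw [(Finset.mem_filter.mp hπ).2])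
      rw [step, Finset.sum_const, nsmul_eq_mul]
      rfl
    · rw [Finset.mem_Icc]
      show 1 ≤ altRuns π ∧ altRuns π ≤ n - 1
      rw [haltRuns π]
      have h2 := dirChanges_le π
      omega
  -- step 3 : reindexing by composing with the reversal
  have hrev : (∑ π : Equiv.Perm (Fin n), (X : Polynomial ℝ) ^ (f π))
      = ∑ π : Equiv.Perm (Fin n), X ^ (f (π.trans Fin.revPerm)) := by
    exact (Equiv.sum_comp (Equiv.mulLeft (Fin.revPerm : Equiv.Perm (Fin n)))
      (fun π => (X : Polynomial ℝ) ^ (f π))).symm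
  -- step 4 : pointwise identity
  have hpt : ∀ π : Equiv.Perm (Fin n),
      (X : Polynomial ℝ) ^ (f π) + X ^ (f (π.trans Fin.revPerm))
        = (1 + X) * X ^ (altRuns π) := by
    intro π
    have h1 : f π = dirChanges π + 1 + (if pval π 1 < pval π 0 then 1 else 0) :=
      las_formula hn π
    have h2 : f (π.trans Fin.revPerm) = dirChanges (π.trans Fin.revPerm) + 1
        + (if pval (π.trans Fin.revPerm) 1 < pval (π.trans Fin.revPerm) 0 then 1 else 0) :=
      las_formula hn (π.trans Fin.revPerm)
    have h3 : pval (π.trans Fin.revPerm) 1 < pval (π.trans Fin.revPerm) 0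
        ↔ pval π 0 < pval π 1 := pval_rev_lt_iff π (by omega) (by omega)
    rw [dirChanges_rev] at h2
    rw [h1, h2, haltRuns π]
    rcases lt_or_gt_of_ne (pval_ne hn π) with h | h
    · rw [if_neg (not_lt.mpr h.le), if_pos (h3.mpr h)]
      ring
    · rw [if_pos h, if_neg (by rw [h3]; exact not_lt.mpr h.le)]
      ring
  -- assemble
  have hsum : (∑ π : Equiv.Perm (Fin n), (X : Polynomial ℝ) ^ (f π))
      + (∑ π : Equiv.Perm (Fin n), (X : Polynomial ℝ) ^ (f π))
      = (1 + X) * ∑ π : Equiv.Perm (Fin n), X ^ (altRuns π) := by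
    nth_rewrite 2 [hrev]
    rw [← Finset.sum_add_distrib, Finset.mul_sum]
    exact Finset.sum_congr rfl (fun π _ => hpt π)
  rw [hLHS, hRHS]
  have h2 : (2 : Polynomial ℝ) * (∑ π : Equiv.Perm (Fin n), (X : Polynomial ℝ) ^ (f π))
      = (1 + X) * ∑ π : Equiv.Perm (Fin n), X ^ (altRuns π) := by
    rw [two_mul]; exact hsum
  have hc : (Polynomial.C (1/2 : ℝ)) * 2 = 1 := by
    rw [← map_ofNat (Polynomial.C : ℝ →+* Polynomial ℝ) 2, ← Polynomial.C_mul]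
    norm_num
  calc (∑ π : Equiv.Perm (Fin n), (X : Polynomial ℝ) ^ (f π))
      = (Polynomial.C (1/2 : ℝ) * 2) * ∑ π : Equiv.Perm (Fin n), X ^ (f π) := by
        rw [hc, one_mul]
    _ = Polynomial.C (1/2 : ℝ) * ((2 : Polynomial ℝ) * ∑ π : Equiv.Perm (Fin n), X ^ (f π)) := by
        ring
    _ = Polynomial.C (1/2 : ℝ) * ((1 + X) * ∑ π : Equiv.Perm (Fin n), X ^ (altRuns π)) := by
        rw [h2]
    _ = Polynomial.C (1/2 : ℝ) * (1 + X) * ∑ π : Equiv.Perm (Fin n), X ^ (altRuns π) := by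
        ring
end

section
/- Let D be the derivation on ℤ[y,z] with D(y) = yz and D(z) = y². Then for all n ≥ 0, D^n(y) = Σ_{k=0}^{⌊n/2⌋} W̃(n,k)·y^{2k+1}·z^{n-2k}, where W̃(n,k) is the number of permutations of [n] with k left peaks. -/
open Finset Polynomial

/-- number of left peaks of `π` (with the convention `π(0) = 0`) -/
def leftPeaks {n : ℕ} (π : Equiv.Perm (Fin n)) : ℕ :=
  ((Finset.range (n - 1)).filter (fun i =>
    (if i = 0 then 0 else pval π (i-1)) < pval π i ∧ pval π (i+1) < pval π i)).card

/-- `W̃(n,k)`: the number of permutations of `[n]` with `k` left peaks -/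
def leftPeakNum (n k : ℕ) : ℕ :=
  (Finset.univ.filter (fun π : Equiv.Perm (Fin n) => leftPeaks π = k)).card

/-- insert the max value `n+1` at position `p` -/
def ins {n : ℕ} (τ : Equiv.Perm (Fin n)) (p : Fin (n+1)) : Equiv.Perm (Fin (n+1)) :=
  (finSuccEquiv' p).trans ((Equiv.optionCongr τ).trans finSuccEquivLast.symm)

lemma ins_apply_self {n : ℕ} (τ : Equiv.Perm (Fin n)) (p : Fin (n+1)) :
    ins τ p p = Fin.last n := by
  simp [ins]

lemma ins_apply_succAbove {n : ℕ} (τ : Equiv.Perm (Fin n)) (p : Fin (n+1)) (j : Fin n) :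
    ins τ p (p.succAbove j) = (τ j).castSucc := by
  simp [ins, finSuccEquiv'_succAbove]

lemma pval_le {n : ℕ} (π : Equiv.Perm (Fin n)) (i : ℕ) : pval π i ≤ n := by
  unfold pval; split
  · exact Nat.succ_le_of_lt (Fin.is_lt _)
  · exact Nat.zero_le _

lemma pval_pos {n : ℕ} (π : Equiv.Perm (Fin n)) {i : ℕ} (h : i < n) : 0 < pval π i := by
  unfold pval; rw [dif_pos h]; omega

lemma pval_ins_self {n : ℕ} (τ : Equiv.Perm (Fin n)) (p : Fin (n+1)) :
    pval (ins τ p) p.val = n + 1 := by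
  unfold pval
  rw [dif_pos p.isLt]
  have : (⟨p.val, p.isLt⟩ : Fin (n+1)) = p := rfl
  rw [this, ins_apply_self]
  simp [Fin.last]

lemma pval_ins_lt {n : ℕ} (τ : Equiv.Perm (Fin n)) (p : Fin (n+1)) {i : ℕ}
    (h : i < p.val) : pval (ins τ p) i = pval τ i := by
  have hin : i < n := by have := p.isLt; omega
  have hin1 : i < n + 1 := by omega
  unfold pval
  rw [dif_pos hin1, dif_pos hin]
  have hsa : (⟨i, hin1⟩ : Fin (n+1)) = p.succAbove ⟨i, hin⟩ := by
    rw [Fin.succAbove_of_castSucc_lt]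
    · rfl
    · exact h
  rw [hsa, ins_apply_succAbove]
  simp

lemma pval_ins_gt {n : ℕ} (τ : Equiv.Perm (Fin n)) (p : Fin (n+1)) {i : ℕ}
    (h1 : p.val < i) (h2 : i ≤ n) : pval (ins τ p) i = pval τ (i - 1) := by
  have hin : i - 1 < n := by omega
  have hin1 : i < n + 1 := by omega
  unfold pval
  rw [dif_pos hin1, dif_pos hin]
  have hsa : (⟨i, hin1⟩ : Fin (n+1)) = p.succAbove ⟨i - 1, hin⟩ := by
    rw [Fin.succAbove_of_le_castSucc]
    · ext; simp; omega
    · rw [Fin.le_castSucc_iff]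
      show p.val < i - 1 + 1
      omega
  rw [hsa, ins_apply_succAbove]
  simp

def peakSet {n : ℕ} (π : Equiv.Perm (Fin n)) : Finset ℕ :=
  ((Finset.range (n - 1)).filter (fun i =>
    (if i = 0 then 0 else pval π (i-1)) < pval π i ∧ pval π (i+1) < pval π i))

lemma leftPeaks_eq_card {n : ℕ} (π : Equiv.Perm (Fin n)) :
    leftPeaks π = (peakSet π).card := rfl

lemma mem_peakSet_iff {n : ℕ} (π : Equiv.Perm (Fin n)) (j : ℕ) :
    j ∈ peakSet π ↔ j < n - 1 ∧
      (if j = 0 then 0 else pval π (j-1)) < pval π j ∧ pval π (j+1) < pval π j := by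
  simp [peakSet]


lemma mem_peakSet_ins {n : ℕ} (τ : Equiv.Perm (Fin n)) (p : Fin (n+1)) (j : ℕ) :
    j ∈ peakSet (ins τ p) ↔
      (j + 1 < p.val ∧ j ∈ peakSet τ) ∨ (j = p.val ∧ p.val < n) ∨
      (p.val + 2 ≤ j ∧ j - 1 ∈ peakSet τ) := by
  have hp := p.isLt
  rw [mem_peakSet_iff, mem_peakSet_iff, mem_peakSet_iff]
  simp only [Nat.add_sub_cancel]
  by_cases hjn : n ≤ j
  · -- both sides false
    constructor
    · rintro ⟨h1, -⟩; omega
    · rintro (⟨h1, h2, -⟩ | ⟨h1, h2⟩ | ⟨h1, h2, -⟩) <;> omega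
  push_neg at hjn
  rcases lt_trichotomy (j+1) p.val with hc | hc | hc
  · -- j+1 < p : same as peak of τ at j
    have e1 : pval (ins τ p) j = pval τ j := pval_ins_lt τ p (by omega)
    have e2 : pval (ins τ p) (j+1) = pval τ (j+1) := pval_ins_lt τ p hc
    have e0 : (if j = 0 then 0 else pval (ins τ p) (j-1))
        = (if j = 0 then 0 else pval τ (j-1)) := by
      split_ifs with h
      · rfl
      · exact pval_ins_lt τ p (by omega)
    rw [e0, e1, e2]
    constructor
    · rintro ⟨h1, h2, h3⟩; exact Or.inl ⟨hc, by omega, h2, h3⟩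
    · rintro (⟨-, h1, h2, h3⟩ | ⟨h1, -⟩ | ⟨h1, -⟩)
      · exact ⟨by omega, h2, h3⟩
      · omega
      · omega
  · -- j + 1 = p : right neighbor is the max
    have e1 : pval (ins τ p) j = pval τ j := pval_ins_lt τ p (by omega)
    have e2 : pval (ins τ p) (j+1) = n + 1 := by
      have : j + 1 = p.val := hc
      rw [this]; exact pval_ins_self τ p
    constructor
    · rintro ⟨h1, h2, h3⟩
      rw [e2, e1] at h3
      have := pval_le τ j; omega
    · rintro (h | h | h) <;> omega
  · rcases Nat.lt_or_ge p.val j with hc2 | hc2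
    · rcases Nat.lt_or_ge (p.val + 1) j with hc3 | hc3
      · -- j ≥ p+2 : shifted peak
        have h212 : j - 1 - 1 = j - 2 := by omega
        have e1 : pval (ins τ p) (j-1) = pval τ (j-2) := by
          rw [pval_ins_gt τ p (by omega) (by omega), h212]
        have e2 : pval (ins τ p) j = pval τ (j-1) := pval_ins_gt τ p (by omega) (by omega)
        have e3 : pval (ins τ p) (j+1) = pval τ j := by
          rw [pval_ins_gt τ p (by omega) (by omega)]
          simp
        have e0 : (if j - 1 = 0 then 0 else pval τ (j-1-1)) = pval τ (j - 2) := by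
          rw [if_neg (by omega), h212]
        have e4 : j - 1 + 1 = j := by omega
        rw [if_neg (by omega), e1, e2, e3, e0, e4]
        constructor
        · rintro ⟨h1, h2, h3⟩
          exact Or.inr (Or.inr ⟨by omega, by omega, h2, h3⟩)
        · rintro (h | h | ⟨h1, h2, h3, h4⟩)
          · omega
          · omega
          · exact ⟨by omega, h3, h4⟩
      · -- j = p + 1 : left neighbor is the max
        have e1 : pval (ins τ p) (j-1) = n + 1 := by
          have : j - 1 = p.val := by omega
          rw [this]; exact pval_ins_self τ p
        have e2 : pval (ins τ p) j = pval τ (j-1) := pval_ins_gt τ p (by omega) (by omega)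
        constructor
        · rintro ⟨h1, h2, h3⟩
          rw [if_neg (by omega), e1, e2] at h2
          have := pval_le τ (j-1); omega
        · rintro (h | h | h) <;> omega
    · -- j = p : always a peak (since j < n)
      have hj : j = p.val := by omega
      have e1 : pval (ins τ p) j = n + 1 := by rw [hj]; exact pval_ins_self τ p
      constructor
      · rintro ⟨h1, -, -⟩; exact Or.inr (Or.inl ⟨hj, by omega⟩)
      · rintro (h | ⟨-, h⟩ | h)
        · omega
        · refine ⟨by omega, ?_, ?_⟩
          · rw [e1]
            by_cases hj0 : j = 0
            · simp [hj0]
            · rw [if_neg hj0, pval_ins_lt τ p (by omega)]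
              have := pval_le τ (j-1); omega
          · rw [e1, pval_ins_gt τ p (by omega) (by omega)]
            have := pval_le τ (j+1-1); omega
        · omega

lemma peakSet_nonadj {n : ℕ} (π : Equiv.Perm (Fin n)) {i : ℕ}
    (h : i ∈ peakSet π) : i + 1 ∉ peakSet π := by
  rw [mem_peakSet_iff] at h
  rw [mem_peakSet_iff]
  rintro ⟨-, h2, -⟩
  rw [if_neg (by omega), Nat.add_sub_cancel] at h2
  omega

lemma mem_peakSet_lt {n : ℕ} (π : Equiv.Perm (Fin n)) {i : ℕ}
    (h : i ∈ peakSet π) : i < n - 1 := ((mem_peakSet_iff π i).mp h).1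

lemma leftPeaks_ins {n : ℕ} (τ : Equiv.Perm (Fin n)) (p : Fin (n+1)) :
    leftPeaks (ins τ p) = leftPeaks τ +
      (if p.val < n ∧ p.val ∉ (peakSet τ ∪ (peakSet τ).image (· + 1)) then 1 else 0) := by
  classical
  set S := peakSet τ with hS
  have hp := p.isLt
  have hset : peakSet (ins τ p) =
      ((S.filter (fun j => j + 1 < p.val)) ∪ (S.filter (fun j => p.val < j)).image (· + 1)) ∪
      (if p.val < n then {p.val} else ∅) := by
    ext j
    rw [mem_peakSet_ins]
    simp only [mem_union, mem_filter, mem_image]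
    constructor
    · rintro (⟨h1, h2⟩ | ⟨h1, h2⟩ | ⟨h1, h2⟩)
      · exact Or.inl (Or.inl ⟨h2, h1⟩)
      · rw [if_pos h2]; subst h1; simp
      · refine Or.inl (Or.inr ⟨j - 1, ⟨h2, by omega⟩, by omega⟩)
    · rintro ((⟨h1, h2⟩ | ⟨a, ⟨ha1, ha2⟩, ha3⟩) | hi)
      · exact Or.inl ⟨h2, h1⟩
      · refine Or.inr (Or.inr ⟨by omega, ?_⟩)
        have : j - 1 = a := by omega
        rwa [this]
      · split_ifs at hi with h
        · rw [mem_singleton] at hi; exact Or.inr (Or.inl ⟨hi, h⟩)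
        · simp at hi
  have hd1 : Disjoint (S.filter (fun j => j + 1 < p.val))
      ((S.filter (fun j => p.val < j)).image (· + 1)) := by
    rw [Finset.disjoint_left]
    intro a ha hb
    rw [mem_filter] at ha
    simp only [mem_image, mem_filter] at hb
    obtain ⟨b, ⟨-, hb1⟩, hb2⟩ := hb
    omega
  have hd2 : Disjoint ((S.filter (fun j => j + 1 < p.val)) ∪
      (S.filter (fun j => p.val < j)).image (· + 1)) (if p.val < n then {p.val} else ∅) := by
    rw [Finset.disjoint_right]
    intro a ha
    split_ifs at ha with h
    · rw [mem_singleton] at ha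
      subst ha
      simp only [mem_union, mem_filter, mem_image, not_or]
      constructor
      · rintro ⟨-, h1⟩; omega
      · rintro ⟨b, ⟨-, hb1⟩, hb2⟩; omega
    · simp at ha
  have hcard : leftPeaks (ins τ p) =
      (S.filter (fun j => j + 1 < p.val)).card + (S.filter (fun j => p.val < j)).card +
      (if p.val < n then 1 else 0) := by
    rw [leftPeaks_eq_card, hset, Finset.card_union_of_disjoint hd2,
      Finset.card_union_of_disjoint hd1, Finset.card_image_of_injective _ (add_left_injective 1)]
    congr 1
    split_ifs <;> simp
  -- partition of S
  have hpart : (S.filter (fun j => j + 1 < p.val ∨ p.val < j)).card +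
      (S.filter (fun j => ¬(j + 1 < p.val ∨ p.val < j))).card = S.card :=
    Finset.card_filter_add_card_filter_not _
  have hfor : S.filter (fun j => j + 1 < p.val ∨ p.val < j) =
      S.filter (fun j => j + 1 < p.val) ∪ S.filter (fun j => p.val < j) :=
    Finset.filter_or _ _ _
  have hdisj3 : Disjoint (S.filter (fun j => j + 1 < p.val)) (S.filter (fun j => p.val < j)) := by
    rw [Finset.disjoint_left]
    intro a ha hb
    rw [mem_filter] at ha hb
    omega
  rw [hfor, Finset.card_union_of_disjoint hdisj3] at hpart
  set M := S.filter (fun j => ¬(j + 1 < p.val ∨ p.val < j)) with hM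
  rw [leftPeaks_eq_card (π := τ), ← hS]
  by_cases hT : p.val ∈ S ∪ S.image (· + 1)
  · -- bad position: M has exactly one element, and p.val < n
    have hplt : p.val < n := by
      rw [mem_union] at hT
      rcases hT with h | h
      · have := mem_peakSet_lt τ h; omega
      · simp only [mem_image] at h
        obtain ⟨b, hb, hb2⟩ := h
        have := mem_peakSet_lt τ hb
        omega
    have hMone : M.card = 1 := by
      rw [Finset.card_eq_one]
      have hne : ∃ j0, j0 ∈ M := by
        rw [mem_union] at hT
        rcases hT with h | h
        · exact ⟨p.val, by rw [hM, mem_filter]; exact ⟨h, by omega⟩⟩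
        · simp only [mem_image] at h
          obtain ⟨b, hb, hb2⟩ := h
          exact ⟨b, by rw [hM, mem_filter]; exact ⟨hb, by omega⟩⟩
      obtain ⟨j0, hj0⟩ := hne
      refine ⟨j0, Finset.eq_singleton_iff_unique_mem.mpr ⟨hj0, fun x hx => ?_⟩⟩
      by_contra hxj
      rw [hM, mem_filter] at hj0 hx
      -- x and j0 are distinct elements of {p-1, p}, both in S, adjacent
      have h1 : x = p.val ∨ x + 1 = p.val := by omega
      have h2 : j0 = p.val ∨ j0 + 1 = p.val := by omega
      rcases h1 with h1 | h1 <;> rcases h2 with h2 | h2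
      · omega
      · exact peakSet_nonadj τ hj0.1 (by rw [← hS, show j0 + 1 = x by omega]; exact hx.1)
      · exact peakSet_nonadj τ hx.1 (by rw [← hS, show x + 1 = j0 by omega]; exact hj0.1)
      · omega
    have hMS : M.card ≤ S.card := by
      rw [hM]; exact Finset.card_filter_le _ _
    rw [if_neg (by push_neg; intro _; exact hT)]
    rw [if_pos hplt] at hcard
    omega
  · -- good or last position: M is empty
    have hMempty : M.card = 0 := by
      rw [Finset.card_eq_zero, hM, Finset.filter_eq_empty_iff]
      intro j hj hcon
      apply hT
      rw [mem_union]
      have : j = p.val ∨ j + 1 = p.val := by omega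
      rcases this with h | h
      · exact Or.inl (h ▸ hj)
      · exact Or.inr (by simp only [mem_image]; exact ⟨j, hj, h⟩)
    by_cases hplt : p.val < n
    · rw [if_pos ⟨hplt, hT⟩]
      rw [if_pos hplt] at hcard
      omega
    · rw [if_neg (by tauto)]
      rw [if_neg hplt] at hcard
      omega

lemma peakSet_card_union {n : ℕ} (π : Equiv.Perm (Fin n)) :
    (peakSet π ∪ (peakSet π).image (· + 1)).card = 2 * leftPeaks π := by
  have hd : Disjoint (peakSet π) ((peakSet π).image (· + 1)) := by
    rw [Finset.disjoint_right]
    intro a ha hb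
    simp only [mem_image] at ha
    obtain ⟨b, hb', rfl⟩ := ha
    exact peakSet_nonadj π hb' hb
  rw [Finset.card_union_of_disjoint hd,
    Finset.card_image_of_injective _ (add_left_injective 1), leftPeaks_eq_card]
  omega

lemma peakSet_union_subset {n : ℕ} (π : Equiv.Perm (Fin n)) :
    (peakSet π ∪ (peakSet π).image (· + 1)) ⊆ Finset.range n := by
  intro a ha
  rw [mem_union] at ha
  rw [mem_range]
  rcases ha with h | h
  · have := mem_peakSet_lt π h; omega
  · simp only [mem_image] at h
    obtain ⟨b, hb, rfl⟩ := h
    have := mem_peakSet_lt π hb; omega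

lemma two_mul_leftPeaks_le {n : ℕ} (π : Equiv.Perm (Fin n)) : 2 * leftPeaks π ≤ n := by
  rw [← peakSet_card_union]
  calc _ ≤ (Finset.range n).card := Finset.card_le_card (peakSet_union_subset π)
    _ = n := Finset.card_range n

lemma leftPeakNum_eq_zero {n k : ℕ} (h : n < 2 * k) : leftPeakNum n k = 0 := by
  rw [leftPeakNum, Finset.card_eq_zero, Finset.filter_eq_empty_iff]
  intro π _
  have := two_mul_leftPeaks_le π
  omega

lemma count_good {n : ℕ} (τ : Equiv.Perm (Fin n)) :
    ((Finset.univ : Finset (Fin (n+1))).filter (fun p =>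
      p.val < n ∧ p.val ∉ (peakSet τ ∪ (peakSet τ).image (· + 1)))).card
      = n - 2 * leftPeaks τ := by
  classical
  set T := peakSet τ ∪ (peakSet τ).image (· + 1) with hT
  have h1 : ((Finset.univ : Finset (Fin (n+1))).filter (fun p =>
      p.val < n ∧ p.val ∉ T)).card = ((Finset.range n) \ T).card := by
    apply Finset.card_bij (fun p _ => p.val)
    · intro p hp
      rw [mem_filter] at hp
      rw [Finset.mem_sdiff, mem_range]
      exact ⟨hp.2.1, hp.2.2⟩
    · intro p _ q _ h
      exact Fin.val_injective h
    · intro a ha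
      rw [Finset.mem_sdiff, mem_range] at ha
      exact ⟨⟨a, by omega⟩, by rw [mem_filter]; exact ⟨mem_univ _, ha.1, ha.2⟩, rfl⟩
  rw [h1, Finset.card_sdiff_of_subset (peakSet_union_subset τ), Finset.card_range, peakSet_card_union]

lemma count_positions {n : ℕ} (τ : Equiv.Perm (Fin n)) (k : ℕ) :
    ((Finset.univ : Finset (Fin (n+1))).filter (fun p => leftPeaks (ins τ p) = k)).card
      = if leftPeaks τ = k then 2 * k + 1
        else if leftPeaks τ + 1 = k then n - 2 * leftPeaks τ else 0 := by
  classical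
  set T := peakSet τ ∪ (peakSet τ).image (· + 1) with hT
  have hbound := two_mul_leftPeaks_le τ
  have hgood := count_good τ
  rw [← hT] at hgood
  by_cases hk : leftPeaks τ = k
  · rw [if_pos hk]
    have heq : (Finset.univ : Finset (Fin (n+1))).filter (fun p => leftPeaks (ins τ p) = k)
        = Finset.univ.filter (fun p : Fin (n+1) => ¬(p.val < n ∧ p.val ∉ T)) := by
      apply Finset.filter_congr
      intro p _
      rw [leftPeaks_ins, ← hT]
      split_ifs with h
      · exact iff_of_false (by omega) (not_not_intro h)
      · exact iff_of_true (by omega) h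
    rw [heq]
    have hsplit := Finset.card_filter_add_card_filter_not
      (s := (Finset.univ : Finset (Fin (n+1)))) (p := fun p => p.val < n ∧ p.val ∉ T)
    rw [Finset.card_univ, Fintype.card_fin] at hsplit
    omega
  · rw [if_neg hk]
    by_cases hk2 : leftPeaks τ + 1 = k
    · rw [if_pos hk2]
      have heq : (Finset.univ : Finset (Fin (n+1))).filter (fun p => leftPeaks (ins τ p) = k)
          = Finset.univ.filter (fun p : Fin (n+1) => p.val < n ∧ p.val ∉ T) := by
        apply Finset.filter_congr
        intro p _
        rw [leftPeaks_ins, ← hT]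
        split_ifs with h
        · exact iff_of_true (by omega) h
        · exact iff_of_false (by omega) (fun hc => h hc)
      rw [heq, hgood]
    · rw [if_neg hk2, Finset.card_eq_zero, Finset.filter_eq_empty_iff]
      intro p _
      rw [leftPeaks_ins, ← hT]
      split_ifs <;> omega

lemma ins_injective {n : ℕ} :
    Function.Injective (fun x : Fin (n+1) × Equiv.Perm (Fin n) => ins x.2 x.1) := by
  rintro ⟨p, τ⟩ ⟨q, σ⟩ h
  simp only at h
  have hpq : p = q := by
    have h1 : ins τ p p = ins σ q q := by rw [ins_apply_self, ins_apply_self]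
    rw [h] at h1
    exact (ins σ q).injective h1
  subst hpq
  have hτσ : τ = σ := by
    apply Equiv.ext
    intro j
    have h1 : ins τ p (p.succAbove j) = ins σ p (p.succAbove j) := by rw [h]
    rw [ins_apply_succAbove, ins_apply_succAbove] at h1
    exact Fin.castSucc_injective n h1
  rw [hτσ]

lemma ins_bijective {n : ℕ} :
    Function.Bijective (fun x : Fin (n+1) × Equiv.Perm (Fin n) => ins x.2 x.1) := by
  rw [Fintype.bijective_iff_injective_and_card]
  refine ⟨ins_injective, ?_⟩
  rw [Fintype.card_prod, Fintype.card_perm, Fintype.card_perm, Fintype.card_fin,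
    Fintype.card_fin, Nat.factorial_succ]

lemma leftPeakNum_succ_sum (n k : ℕ) :
    leftPeakNum (n+1) k = ∑ τ : Equiv.Perm (Fin n),
      (if leftPeaks τ = k then 2 * k + 1
        else if leftPeaks τ + 1 = k then n - 2 * leftPeaks τ else 0) := by
  classical
  rw [leftPeakNum, Finset.card_filter]
  rw [← Fintype.sum_bijective _ ins_bijective
    (fun x : Fin (n+1) × Equiv.Perm (Fin n) => if leftPeaks (ins x.2 x.1) = k then 1 else 0)
    (fun σ => if leftPeaks σ = k then 1 else 0) (fun x => rfl)]
  rw [Fintype.sum_prod_type, Finset.sum_comm]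
  congr 1
  ext τ
  rw [← Finset.card_filter, count_positions]

lemma sum_ite_eq_mul_count {n : ℕ} (k v : ℕ) :
    (∑ τ : Equiv.Perm (Fin n), if leftPeaks τ = k then v else 0)
      = v * leftPeakNum n k := by
  rw [← Finset.sum_filter, Finset.sum_const, smul_eq_mul, leftPeakNum, mul_comm]

lemma W_succ_zero (n : ℕ) : leftPeakNum (n+1) 0 = leftPeakNum n 0 := by
  rw [leftPeakNum_succ_sum]
  have h : ∀ τ : Equiv.Perm (Fin n),
      (if leftPeaks τ = 0 then 2 * 0 + 1
        else if leftPeaks τ + 1 = 0 then n - 2 * leftPeaks τ else 0)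
      = if leftPeaks τ = 0 then 1 else 0 := by
    intro τ
    by_cases h1 : leftPeaks τ = 0
    · rw [if_pos h1, if_pos h1]
    · rw [if_neg h1, if_neg h1, if_neg (by omega)]
  rw [Finset.sum_congr rfl (fun τ _ => h τ), sum_ite_eq_mul_count, one_mul]

lemma W_succ_succ (n k : ℕ) :
    leftPeakNum (n+1) (k+1)
      = (2 * (k+1) + 1) * leftPeakNum n (k+1) + (n - 2 * k) * leftPeakNum n k := by
  rw [leftPeakNum_succ_sum]
  have h : ∀ τ : Equiv.Perm (Fin n),
      (if leftPeaks τ = k + 1 then 2 * (k+1) + 1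
        else if leftPeaks τ + 1 = k + 1 then n - 2 * leftPeaks τ else 0)
      = (if leftPeaks τ = k + 1 then 2 * (k+1) + 1 else 0)
        + (if leftPeaks τ = k then n - 2 * k else 0) := by
    intro τ
    by_cases h1 : leftPeaks τ = k + 1
    · rw [if_pos h1, if_pos h1, if_neg (by omega)]
    · rw [if_neg h1, if_neg h1]
      by_cases h2 : leftPeaks τ = k
      · rw [if_pos (by omega), if_pos h2, h2, zero_add]
      · rw [if_neg (by omega), if_neg h2]
  rw [Finset.sum_congr rfl (fun τ _ => h τ), Finset.sum_add_distrib,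
    sum_ite_eq_mul_count, sum_ite_eq_mul_count]

lemma leftPeakNum_zero : leftPeakNum 0 0 = 1 := by
  rw [leftPeakNum, Finset.filter_true_of_mem (fun π _ => by simp [leftPeaks]),
    Finset.card_univ, Fintype.card_perm]
  simp


/-- For the grammar `G = {y → yz, z → y²}` (here `y = X 0`, `z = X 1`):
`Dⁿ(y) = ∑_{k=0}^{⌊n/2⌋} W̃(n,k) y^{2k+1} z^{n-2k}` for `n ≥ 0`. -/
theorem stmt12
    (D : Derivation ℤ (MvPolynomial (Fin 2) ℤ) (MvPolynomial (Fin 2) ℤ))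
    (hy : D (MvPolynomial.X 0) = MvPolynomial.X 0 * MvPolynomial.X 1)
    (hz : D (MvPolynomial.X 1) = MvPolynomial.X 0 ^ 2) :
    ∀ n : ℕ,
      (⇑D)^[n] (MvPolynomial.X 0)
        = ∑ k ∈ Finset.range (n/2 + 1),
            (leftPeakNum n k : MvPolynomial (Fin 2) ℤ)
              * MvPolynomial.X 0 ^ (2*k + 1) * MvPolynomial.X 1 ^ (n - 2*k) := by
  intro n
  induction n with
  | zero =>
    simp [leftPeakNum_zero]
  | succ n ih =>
    set y : MvPolynomial (Fin 2) ℤ := MvPolynomial.X 0 with hydef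
    set z : MvPolynomial (Fin 2) ℤ := MvPolynomial.X 1 with hzdef
    set A : ℕ → MvPolynomial (Fin 2) ℤ := fun k =>
      ((leftPeakNum n k * (2*k+1) : ℕ) : MvPolynomial (Fin 2) ℤ)
        * y ^ (2*k+1) * z ^ (n+1 - 2*k) with hA
    set B : ℕ → MvPolynomial (Fin 2) ℤ := fun j =>
      ((if j = 0 then 0 else leftPeakNum n (j-1) * (n - 2*(j-1)) : ℕ) : MvPolynomial (Fin 2) ℤ)
        * y ^ (2*j+1) * z ^ (n+1 - 2*j) with hB
    set C : ℕ → MvPolynomial (Fin 2) ℤ := fun k =>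
      ((leftPeakNum (n+1) k : ℕ) : MvPolynomial (Fin 2) ℤ)
        * y ^ (2*k+1) * z ^ (n+1 - 2*k) with hC
    have hterm : ∀ k ∈ Finset.range (n/2 + 1),
        D ((leftPeakNum n k : MvPolynomial (Fin 2) ℤ) * y ^ (2*k+1) * z ^ (n - 2*k))
          = A k + B (k+1) := by
      intro k hk
      rw [Finset.mem_range] at hk
      have h2k : 2*k ≤ n := by omega
      rw [mul_assoc, Derivation.leibniz, Derivation.map_natCast, smul_zero, add_zero,
        Derivation.leibniz, Derivation.leibniz_pow, Derivation.leibniz_pow, hy, hz]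
      simp only [hA, hB, smul_eq_mul, nsmul_eq_mul, Nat.add_sub_cancel]
      rw [if_neg (by omega)]
      have e5 : n + 1 - 2*k = (n - 2*k) + 1 := by omega
      have e2 : n + 1 - 2*(k+1) = n - 2*k - 1 := by omega
      rw [e5, e2]
      push_cast
      ring
    rw [Function.iterate_succ_apply', ih, map_sum, Finset.sum_congr rfl hterm,
      Finset.sum_add_distrib]
    have hsub : Finset.range (n/2 + 1) ⊆ Finset.range (n+2) :=
      Finset.range_subset_range.mpr (by omega)
    have hAzero : ∀ k ∈ Finset.range (n+2), k ∉ Finset.range (n/2+1) → A k = 0 := by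
      intro k _ hk
      rw [Finset.mem_range] at hk
      have : leftPeakNum n k = 0 := leftPeakNum_eq_zero (by omega)
      simp [hA, this]
    have hBzero : ∀ k ∈ Finset.range (n+2), k ∉ Finset.range (n/2+1) → B (k+1) = 0 := by
      intro k _ hk
      rw [Finset.mem_range] at hk
      have : leftPeakNum n k = 0 := leftPeakNum_eq_zero (by omega)
      simp [hB, this]
    rw [Finset.sum_subset hsub hAzero, Finset.sum_subset hsub hBzero]
    have hshift : ∑ k ∈ Finset.range (n+2), B (k+1) = ∑ k ∈ Finset.range (n+2), B k := by
      have h1 : ∑ k ∈ Finset.range (n+3), B k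
          = ∑ k ∈ Finset.range (n+2), B (k+1) + B 0 := Finset.sum_range_succ' B (n+2)
      have hB0 : B 0 = 0 := by simp [hB]
      have h2 : ∑ k ∈ Finset.range (n+3), B k
          = ∑ k ∈ Finset.range (n+2), B k + B (n+2) := Finset.sum_range_succ B (n+2)
      have hBtop : B (n+2) = 0 := by
        have : leftPeakNum n (n+1) = 0 := leftPeakNum_eq_zero (by omega)
        simp [hB, this]
      rw [hB0, add_zero] at h1
      rw [hBtop, add_zero] at h2
      rw [← h1, h2]
    rw [hshift, ← Finset.sum_add_distrib]
    have hAB : ∀ k ∈ Finset.range (n+2), A k + B k = C k := by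
      intro k _
      cases k with
      | zero =>
        simp [hA, hB, hC, W_succ_zero n]
      | succ j =>
        simp only [hA, hB, hC, if_neg (Nat.succ_ne_zero j), Nat.add_sub_cancel]
        rw [W_succ_succ n j]
        push_cast
        ring
    rw [Finset.sum_congr rfl hAB]
    symm
    apply Finset.sum_subset (Finset.range_subset_range.mpr (by omega : (n+1)/2 + 1 ≤ n+2))
    intro k _ hk
    rw [Finset.mem_range] at hk
    have : leftPeakNum (n+1) k = 0 := leftPeakNum_eq_zero (by omega)
    simp [hC, this]
end
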